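/- Let ρ be a square complex matrix with ρ = Σ_{l=1}^r Ψ_l Ψ_l† where the vectors Ψ_1, …, Ψ_r are linearly independent, and suppose ρ = Σ_{n=1}^K Φ_n Φ_n† is another decomposition into K ≥ r rank-one terms. Then there exists a K×r complex matrix W with W†W = I_r such that Φ_n = Σ_{l=1}^r W_{nl} Ψ_l for all n = 1, …, K. -/

import Mathlib

open Matrix BigOperators
open scoped ComplexOrder

noncomputable section

/-- The rank-one outer product `u u†`. -/
def outer {ι : Type*} (u : ι → ℂ) : Matrix ι ι ℂ := Matrix.vecMulVec u (star u)

section aux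

variable {d : ℕ}

lemma aux_sum_mulVec {ι : Type*} (s : Finset ι) (M : ι → Matrix (Fin d) (Fin d) ℂ)
    (v : Fin d → ℂ) : (∑ i ∈ s, M i) *ᵥ v = ∑ i ∈ s, M i *ᵥ v := by
  ext j
  simp [mulVec, dotProduct, Matrix.sum_apply, Finset.sum_apply, Finset.sum_mul]
  rw [Finset.sum_comm]

lemma aux_dotProduct_sum {ι : Type*} (s : Finset ι) (u : ι → Fin d → ℂ) (v : Fin d → ℂ) :
    v ⬝ᵥ (∑ i ∈ s, u i) = ∑ i ∈ s, v ⬝ᵥ u i := by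
  simp [dotProduct, Finset.sum_apply, Finset.mul_sum]
  rw [Finset.sum_comm]

lemma outer_dot (u x y : Fin d → ℂ) :
    x ⬝ᵥ ((outer u) *ᵥ y) = (x ⬝ᵥ u) * (star u ⬝ᵥ y) := by
  simp only [outer, dotProduct, mulVec, vecMulVec_apply, Pi.star_apply]
  rw [Finset.sum_mul]
  congr 1; ext i
  rw [Finset.mul_sum, Finset.mul_sum]
  congr 1; ext j
  ring

/-- Every dual functional on `Fin d → ℂ` is given by a dot product. -/
lemma dual_repr (f : Module.Dual ℂ (Fin d → ℂ)) :
    ∃ w : Fin d → ℂ, ∀ v, f v = v ⬝ᵥ w := by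
  refine ⟨fun i => f (Pi.single i 1), fun v => ?_⟩
  have hv : v = ∑ i, v i • (Pi.single i 1 : Fin d → ℂ) := by
    rw [← Finset.univ_sum_single v]
    congr 1; ext i j
    simp [Pi.single_apply]
  conv_lhs => rw [hv]
  rw [map_sum]
  simp [dotProduct, LinearMap.map_smul]

lemma sum_conj_mul_self_eq_zero {ι : Type*} [Fintype ι] (c : ι → ℂ)
    (h : ∑ i, star (c i) * c i = 0) : ∀ i, c i = 0 := by
  have h2 : ∑ i, Complex.normSq (c i) = 0 := by
    have : ((∑ i, Complex.normSq (c i) : ℝ) : ℂ) = 0 := by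
      push_cast
      rw [← h]
      congr 1; ext i
      rw [Complex.star_def, ← Complex.normSq_eq_conj_mul_self]
    exact_mod_cast this
  intro i
  have := (Finset.sum_eq_zero_iff_of_nonneg
    (fun i _ => Complex.normSq_nonneg (c i))).1 h2 i (Finset.mem_univ i)
  exact Complex.normSq_eq_zero.1 this

end aux

/-- If ρ = Σ_l Ψ_l Ψ_l† with the Ψ_l linearly independent and
ρ = Σ_n Φ_n Φ_n† is another decomposition into K ≥ r rank-one terms, then
there is a K×r matrix W with W†W = 1 and Φ_n = Σ_l W_{nl} Ψ_l. -/
theorem decompositions_related_by_isometry (d r K : ℕ) (hK : r ≤ K)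
    (ρ : Matrix (Fin d) (Fin d) ℂ)
    (Ψ : Fin r → Fin d → ℂ) (hΨ : LinearIndependent ℂ Ψ)
    (hρ : ρ = ∑ l : Fin r, outer (Ψ l))
    (Φ : Fin K → Fin d → ℂ) (hρ' : ρ = ∑ n : Fin K, outer (Φ n)) :
    ∃ W : Matrix (Fin K) (Fin r) ℂ,
      Wᴴ * W = 1 ∧ ∀ n, Φ n = ∑ l : Fin r, W n l • Ψ l := by
  have hEq : ∑ l : Fin r, outer (Ψ l) = ∑ n : Fin K, outer (Φ n) := by
    rw [← hρ, ← hρ']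
  -- quadratic form equality
  have hquad : ∀ v : Fin d → ℂ,
      ∑ l : Fin r, star (star (Ψ l) ⬝ᵥ v) * (star (Ψ l) ⬝ᵥ v)
        = ∑ n : Fin K, star (star (Φ n) ⬝ᵥ v) * (star (Φ n) ⬝ᵥ v) := by
    intro v
    have := congrArg (fun M => star v ⬝ᵥ (M *ᵥ v)) hEq
    simp only [aux_sum_mulVec, aux_dotProduct_sum, outer_dot] at this
    have hsd : ∀ u : Fin d → ℂ, star v ⬝ᵥ u = star (star u ⬝ᵥ v) := by
      intro u
      rw [← star_dotProduct_star, star_star, dotProduct_comm]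
    simpa only [hsd] using this
  -- key vanishing lemma
  have key : ∀ v : Fin d → ℂ, (∀ l, star (Ψ l) ⬝ᵥ v = 0) →
      ∀ n, star (Φ n) ⬝ᵥ v = 0 := by
    intro v hv
    apply sum_conj_mul_self_eq_zero
    rw [← hquad v]
    apply Finset.sum_eq_zero
    intro l _
    rw [hv l, mul_zero]
  -- every Φ n lies in the span of the Ψ's
  have mem : ∀ n, Φ n ∈ Submodule.span ℂ (Set.range Ψ) := by
    intro n
    set S := Submodule.span ℂ (Set.range Ψ)
    rw [← Submodule.Quotient.mk_eq_zero S]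
    rw [← Module.forall_dual_apply_eq_zero_iff ℂ]
    intro φ
    set f : Module.Dual ℂ (Fin d → ℂ) := φ ∘ₗ S.mkQ with hf
    obtain ⟨w, hw⟩ := dual_repr f
    -- f vanishes on each Ψ l
    have hfΨ : ∀ l, f (Ψ l) = 0 := by
      intro l
      have : Ψ l ∈ S := Submodule.subset_span ⟨l, rfl⟩
      simp [hf, (Submodule.Quotient.mk_eq_zero S).2 this, Submodule.mkQ_apply]
    -- hence the vector star w is orthogonal to the Ψ's
    have hvΨ : ∀ l, star (Ψ l) ⬝ᵥ star w = 0 := by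
      intro l
      rw [star_dotProduct_star, dotProduct_comm, ← hw (Ψ l), hfΨ l, star_zero]
    have hΦ : star (Φ n) ⬝ᵥ star w = 0 := key (star w) hvΨ n
    have : f (Φ n) = 0 := by
      rw [hw (Φ n)]
      have := congrArg star hΦ
      rwa [star_dotProduct_star, star_zero, star_star, dotProduct_comm] at this
    simpa [hf, Submodule.mkQ_apply] using this
  -- extract coefficients
  have hW : ∀ n, ∃ c : Fin r → ℂ, ∑ l, c l • Ψ l = Φ n := by
    intro n
    exact (Submodule.mem_span_range_iff_exists_fun ℂ).1 (mem n)
  choose W hWc using hW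
  -- dual family η with η a ⬝ᵥ Ψ l = δ_{a l}
  have hη : ∃ η : Fin r → Fin d → ℂ,
      ∀ a l, Ψ l ⬝ᵥ η a = if a = l then 1 else 0 := by
    let B := Module.Basis.span hΨ
    have hex : ∀ a : Fin r, ∃ η : Fin d → ℂ,
        ∀ l, Ψ l ⬝ᵥ η = if a = l then 1 else 0 := by
      intro a
      obtain ⟨g, hg⟩ := LinearMap.exists_extend (B.coord a)
      obtain ⟨w, hw⟩ := dual_repr g
      refine ⟨w, fun l => ?_⟩
      have h1 : g (Ψ l) = B.coord a (B l) := by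
        have := LinearMap.congr_fun hg (B l)
        simp only [LinearMap.coe_comp, Function.comp_apply, Submodule.coe_subtype] at this
        rwa [show ((B l : Fin d → ℂ)) = Ψ l from congrArg Subtype.val (Module.Basis.span_apply hΨ l)] at this
      have h2 : B.coord a (B l) = if a = l then 1 else 0 := by
        rw [Module.Basis.coord_apply, Module.Basis.repr_self]
        simp [Finsupp.single_apply, eq_comm]
      rw [← hw (Ψ l), h1, h2]
    choose η hηp using hex
    exact ⟨η, hηp⟩
  obtain ⟨η, hηΨ⟩ := hη
  -- dot products of η with Φ give W
  have hηΦ : ∀ a n, Φ n ⬝ᵥ η a = W n a := by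
    intro a n
    rw [← hWc n, dotProduct_comm, aux_dotProduct_sum]
    have : ∀ l, η a ⬝ᵥ (W n l • Ψ l) = W n l * (if a = l then 1 else 0) := by
      intro l
      rw [dotProduct_smul, smul_eq_mul, dotProduct_comm, hηΨ a l]
    rw [Finset.sum_congr rfl (fun l _ => this l)]
    simp
  -- orthonormality
  refine ⟨W, ?_, fun n => (hWc n).symm⟩
  ext a b
  have := congrArg (fun M => η a ⬝ᵥ (M *ᵥ star (η b))) hEq
  simp only [aux_sum_mulVec, aux_dotProduct_sum, outer_dot] at this
  have hsd : ∀ u : Fin d → ℂ, star u ⬝ᵥ star (η b) = star (η b ⬝ᵥ u) := by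
    intro u
    rw [star_dotProduct_star, dotProduct_comm]
  simp only [hsd] at this
  -- rewrite both sides
  have lhs : ∑ l : Fin r, (η a ⬝ᵥ Ψ l) * star (η b ⬝ᵥ Ψ l)
      = if a = b then 1 else 0 := by
    have : ∀ l : Fin r, (η a ⬝ᵥ Ψ l) * star (η b ⬝ᵥ Ψ l)
        = (if a = l then 1 else 0) * (if b = l then 1 else 0) := by
      intro l
      rw [dotProduct_comm, hηΨ a l, dotProduct_comm, hηΨ b l]
      simp [apply_ite star]
    rw [Finset.sum_congr rfl (fun l _ => this l)]
    simp [Finset.sum_ite_eq, eq_comm]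
  have rhs : ∑ n : Fin K, (η a ⬝ᵥ Φ n) * star (η b ⬝ᵥ Φ n)
      = ∑ n : Fin K, W n a * star (W n b) := by
    refine Finset.sum_congr rfl fun n _ => ?_
    rw [dotProduct_comm, hηΦ a n, dotProduct_comm, hηΦ b n]
  have main : ∑ n : Fin K, W n a * star (W n b) = if a = b then 1 else 0 := by
    rw [← rhs, ← this, lhs]
  have main2 : ∑ n : Fin K, (starRingEnd ℂ) (W n a) * W n b = if a = b then 1 else 0 := by
    have h := congrArg star main
    rw [star_sum] at h
    have h2 : ∀ n : Fin K, star (W n a * star (W n b)) = (starRingEnd ℂ) (W n a) * W n b := by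
      intro n
      simp [Complex.star_def, mul_comm]
    rw [Finset.sum_congr rfl (fun n _ => h2 n)] at h
    rw [h]
    by_cases hab : a = b <;> simp [hab]
  simp only [Matrix.mul_apply, Matrix.conjTranspose_apply, Matrix.one_apply]
  change ∑ n, star (W n a) * W n b = _
  simpa [Complex.star_def] using main2
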